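/- Let λ > 0 and let 0 ≤ A ≤ t be real numbers. Then the truncated Laplace measure assigns to the left tail the value Lap(λ, −t)(Set.Iic (A − t)) = (exp(A/λ) − 1)/(2·exp(t/λ) − 1). Equivalently, for a Laplace random variable X with mean 0 and parameter λ, Pr[X ≤ −t + A | X > −t] = (exp(A/λ) − 1)/(2·exp(t/λ) − 1). -/

import Mathlib

open MeasureTheory Real Set

/-- The Laplace measure with mean 0 and scale `l`: density `u ↦ (1/(2l)) exp(-|u|/l)`
with respect to Lebesgue measure. -/
noncomputable def laplaceMeasure (l : ℝ) : Measure ℝ :=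
  volume.withDensity (fun u => ENNReal.ofReal ((1 / (2 * l)) * Real.exp (-|u| / l)))

/-- The Laplace measure with scale `l`, truncated (conditioned) to the interval `(-t, ∞)`. -/
noncomputable def truncLaplace (l t : ℝ) : Measure ℝ :=
  (laplaceMeasure l (Set.Ioi (-t)))⁻¹ • (laplaceMeasure l).restrict (Set.Ioi (-t))

lemma lap_apply (l : ℝ) {s : Set ℝ} (hs : MeasurableSet s)
    (hint : IntegrableOn (fun u => (1 / (2 * l)) * Real.exp (-|u| / l)) s) (hl : 0 < l) :
    laplaceMeasure l s = ENNReal.ofReal (∫ u in s, (1 / (2 * l)) * Real.exp (-|u| / l)) := by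
  rw [laplaceMeasure, withDensity_apply _ hs,
    ← ofReal_integral_eq_lintegral_ofReal hint]
  filter_upwards with u
  positivity

lemma lap_Ioc (l a b : ℝ) (hl : 0 < l) (hb : b ≤ 0) (hab : a ≤ b) :
    laplaceMeasure l (Set.Ioc a b) =
      ENNReal.ofReal ((1/2) * (Real.exp (b/l) - Real.exp (a/l))) := by
  have hcont : Continuous fun u : ℝ => (1 / (2 * l)) * Real.exp (-|u| / l) := by
    fun_prop
  rw [lap_apply l measurableSet_Ioc (hcont.integrableOn_Ioc) hl]
  congr 1
  have hcongr : ∀ u ∈ Set.Ioc a b,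
      (1 / (2 * l)) * Real.exp (-|u| / l) = (1 / (2 * l)) * Real.exp (l⁻¹ * u) := by
    intro u hu
    have h1 : |u| = -u := abs_of_nonpos (hu.2.trans hb)
    rw [h1, neg_neg]; ring_nf
  rw [setIntegral_congr_fun measurableSet_Ioc hcongr,
    ← intervalIntegral.integral_of_le hab, intervalIntegral.integral_const_mul,
    intervalIntegral.integral_comp_mul_left (fun x => Real.exp x)
      (by positivity : l⁻¹ ≠ (0:ℝ)), integral_exp]
  simp only [smul_eq_mul, inv_inv, div_eq_inv_mul]
  field_simp

lemma lap_Ioi_zero (l : ℝ) (hl : 0 < l) :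
    laplaceMeasure l (Set.Ioi 0) = ENNReal.ofReal (1/2) := by
  have hint : IntegrableOn (fun u : ℝ => (1 / (2 * l)) * Real.exp (-|u| / l)) (Set.Ioi 0) := by
    apply Integrable.mono' ((exp_neg_integrableOn_Ioi 0 (by positivity : (0:ℝ) < l⁻¹)).const_mul
      (1 / (2*l)))
    · exact (Continuous.aestronglyMeasurable (by fun_prop)).restrict
    · filter_upwards with u
      rw [norm_mul, norm_eq_abs, norm_eq_abs, abs_exp,
        abs_of_pos (by positivity : (0:ℝ) < 1/(2*l))]
      gcongr
      rw [neg_div, div_eq_inv_mul, neg_mul]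
      exact neg_le_neg (mul_le_mul_of_nonneg_left (le_abs_self u) (by positivity))
  rw [lap_apply l measurableSet_Ioi hint hl]
  congr 1
  have hcongr : ∀ u ∈ Set.Ioi (0:ℝ),
      (1 / (2 * l)) * Real.exp (-|u| / l) = (1 / (2 * l)) * Real.exp (-(l⁻¹ * u)) := by
    intro u hu
    rw [abs_of_pos hu]
    ring_nf
  rw [setIntegral_congr_fun measurableSet_Ioi hcongr, integral_const_mul,
    integral_comp_mul_left_Ioi (fun x => Real.exp (-x)) 0 (by positivity : (0:ℝ) < l⁻¹)]
  simp only [mul_zero, integral_exp_neg_Ioi, smul_eq_mul, inv_inv, neg_zero, exp_zero, mul_one]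
  field_simp

lemma lap_Ioi (l t : ℝ) (hl : 0 < l) (ht : 0 ≤ t) :
    laplaceMeasure l (Set.Ioi (-t)) = ENNReal.ofReal (1 - (1/2) * Real.exp (-t/l)) := by
  have hexp : Real.exp (-t / l) ≤ Real.exp (0 / l) := by gcongr; linarith
  rw [zero_div, Real.exp_zero] at hexp
  have hunion : Set.Ioc (-t) 0 ∪ Set.Ioi 0 = Set.Ioi (-t) :=
    Set.Ioc_union_Ioi_eq_Ioi (by linarith)
  rw [← hunion, measure_union (Set.Ioc_disjoint_Ioi le_rfl) measurableSet_Ioi,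
    lap_Ioc l (-t) 0 hl le_rfl (by linarith), lap_Ioi_zero l hl,
    ← ENNReal.ofReal_add (by rw [zero_div, Real.exp_zero]; linarith) (by norm_num)]
  congr 1
  rw [zero_div, exp_zero]
  ring_nf

/-- Left-tail probability of the truncated Laplace distribution:
`Pr[X ≤ -t + A | X > -t] = (e^{A/λ} - 1)/(2 e^{t/λ} - 1)` for `0 ≤ A ≤ t`. -/
theorem truncLaplace_left_tail (lam A t : ℝ) (hlam : 0 < lam) (hA : 0 ≤ A) (hAt : A ≤ t) :
    truncLaplace lam t (Set.Iic (A - t)) =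
      ENNReal.ofReal ((Real.exp (A / lam) - 1) / (2 * Real.exp (t / lam) - 1)) := by
  have ht : 0 ≤ t := hA.trans hAt
  have hE : 0 < Real.exp (t / lam) := Real.exp_pos _
  have hE1 : 1 ≤ Real.exp (t / lam) := Real.one_le_exp (by positivity)
  have h2 : Real.exp (-t / lam) = (Real.exp (t / lam))⁻¹ := by
    rw [← Real.exp_neg]; ring_nf
  have hb : 0 < 1 - 1/2 * Real.exp (-t/lam) := by
    rw [h2]
    have : (Real.exp (t / lam))⁻¹ ≤ 1 := by
      rw [inv_le_one_iff₀]; right; exact hE1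
    linarith
  rw [truncLaplace, Measure.smul_apply, Measure.restrict_apply measurableSet_Iic]
  have hset : Set.Iic (A - t) ∩ Set.Ioi (-t) = Set.Ioc (-t) (A - t) := by
    rw [Set.inter_comm, Set.Ioi_inter_Iic]
  rw [hset, lap_Ioc lam (-t) (A - t) hlam (by linarith) (by linarith), lap_Ioi lam t hlam ht,
    smul_eq_mul, mul_comm, ← div_eq_mul_inv, ← ENNReal.ofReal_div_of_pos hb]
  congr 1
  have h1 : (A - t) / lam = A / lam + -t / lam := by ring
  rw [h1, Real.exp_add, h2]
  rw [div_eq_div_iff (by rw [← h2]; exact hb.ne') (by intro h; nlinarith)]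
  field_simp
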